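/- Let β ≥ 1 be a real number and set φ = 2π/(13β). Let r > 0, let m, c, x ∈ ℝ² with ‖x − c‖ ≤ r/2 and ‖m − c‖ ≤ β·r, and let u ∈ ℝ² be a unit vector such that the (undirected) angle between u and m − c is at most φ. Then there exists t ≥ 0 with ‖(x + t·u) − m‖ ≤ r; that is, the ray from x in direction u meets the closed disk of radius r centered at m. -/

import Mathlib

open InnerProductGeometry Real
open scoped RealInnerProductSpace

set_option maxHeartbeats 1000000

private lemma aux_final (pw t0 w r : ℝ) (hr : 0 < r) (hpw0 : 0 ≤ pw) (hw0 : 0 ≤ w)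
    (hpyth : pw ^ 2 = w ^ 2 - t0 ^ 2) (hpw : pw ≤ (0.485 * (25/44) + 0.5) * r)
    (ht0 : t0 ^ 2 ≤ (r / 2) ^ 2) : w ≤ r := by
  nlinarith

/-- Paper's Claim (cla:lines): with wedge opening angle `φ = 2π/(13β)`, every ray
starting near the marked cell (center `c`, with `‖x - c‖ ≤ r/2`) in a unit direction `u`
making angle at most `φ` with `m - c` (where `‖m - c‖ ≤ β·r`) meets the closed disk of
radius `r` centered at `m`. -/
theorem ray_meets_inscribed_disk
    (β : ℝ) (hβ : 1 ≤ β) (r : ℝ) (hr : 0 < r)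
    (m c x u : EuclideanSpace ℝ (Fin 2))
    (hx : ‖x - c‖ ≤ r / 2) (hm : ‖m - c‖ ≤ β * r)
    (hu : ‖u‖ = 1)
    (hangle : InnerProductGeometry.angle u (m - c) ≤ 2 * π / (13 * β)) :
    ∃ t : ℝ, 0 ≤ t ∧ ‖(x + t • u) - m‖ ≤ r := by
  have hβ0 : (0:ℝ) < β := lt_of_lt_of_le one_pos hβ
  set v : EuclideanSpace ℝ (Fin 2) := m - c with hv
  set e : EuclideanSpace ℝ (Fin 2) := c - x with he
  set φ : ℝ := 2 * π / (13 * β) with hφdef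
  have hπ : π < 3.15 := Real.pi_lt_d2
  have hπ0 : (0:ℝ) < π := Real.pi_pos
  have hφ0 : 0 ≤ φ := by positivity
  have hφ485 : φ ≤ 0.485 := by
    have h1 : φ ≤ 2 * π / 13 := by
      rw [hφdef]
      apply div_le_div_of_nonneg_left (by positivity) (by norm_num)
      nlinarith
    nlinarith
  have hπ3 : 3 < π := Real.pi_gt_three
  have hφπ : φ ≤ π := by linarith
  -- cos bound
  have hcφ : (0.88 : ℝ) ≤ Real.cos φ := by
    have := Real.one_sub_sq_div_two_le_cos (x := φ)
    nlinarith
  -- inner products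
  set ip : ℝ := (inner ℝ u v : ℝ) with hipdef
  set s : ℝ := (inner ℝ u e : ℝ) with hsdef
  have hd0 : 0 ≤ ‖v‖ := norm_nonneg v
  have hne : ‖e‖ ≤ r / 2 := by rw [he, norm_sub_rev]; exact hx
  -- ip = cos θ * ‖v‖ and cos θ ≥ cos φ
  have hip_eq : Real.cos (angle u v) * ‖v‖ = ip := by
    have := InnerProductGeometry.cos_angle_mul_norm_mul_norm u v
    rw [hu, one_mul] at this; exact this
  have hcos_ge : Real.cos φ ≤ Real.cos (angle u v) :=
    Real.cos_le_cos_of_nonneg_of_le_pi (InnerProductGeometry.angle_nonneg u v) hφπ hangle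
  have hcos_le : Real.cos (angle u v) ≤ 1 := Real.cos_le_one _
  have hip_ge : Real.cos φ * ‖v‖ ≤ ip := by
    rw [← hip_eq]; exact mul_le_mul_of_nonneg_right hcos_ge hd0
  have hip_le : ip ≤ ‖v‖ := by
    have := real_inner_le_norm u v; rwa [hu, one_mul] at this
  have hip_nonneg : 0 ≤ ip := le_trans (by nlinarith) hip_ge
  have hs_abs : |s| ≤ r / 2 := by
    have h := abs_real_inner_le_norm u e
    rw [hu, one_mul] at h
    exact le_trans h hne
  -- perpendicular components
  have hnormsq : ∀ (a : EuclideanSpace ℝ (Fin 2)) (t : ℝ), (inner ℝ u a : ℝ) = t →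
      ‖a - t • u‖ ^ 2 = ‖a‖ ^ 2 - t ^ 2 := by
    intro a t ht
    rw [norm_sub_sq_real, real_inner_smul_right, real_inner_comm, ht, norm_smul, hu]
    simp [abs_mul_abs_self]
    ring
  have hpv_sq : ‖v - ip • u‖ ^ 2 = ‖v‖ ^ 2 - ip ^ 2 := hnormsq v ip rfl
  have hpe_sq : ‖e - s • u‖ ^ 2 = ‖e‖ ^ 2 - s ^ 2 := hnormsq e s rfl
  have hpe : ‖e - s • u‖ ≤ r / 2 := by
    nlinarith [norm_nonneg (e - s • u), sq_nonneg s, norm_nonneg e]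
  -- pv ≤ 0.485 * ‖v‖ using sin φ ≤ φ
  have hsinφ : Real.sin φ ≤ φ := Real.sin_le hφ0
  have hsinφ0 : 0 ≤ Real.sin φ := Real.sin_nonneg_of_nonneg_of_le_pi hφ0 hφπ
  have hpv : ‖v - ip • u‖ ≤ φ * ‖v‖ := by
    have hsc : Real.sin φ ^ 2 = 1 - Real.cos φ ^ 2 := Real.sin_sq φ
    have h2 : Real.sin φ ^ 2 ≤ φ ^ 2 := by nlinarith
    have h3 : (Real.cos φ * ‖v‖) ^ 2 ≤ ip ^ 2 := by
      nlinarith [mul_nonneg (le_trans (by norm_num : (0:ℝ) ≤ 0.88) hcφ) hd0]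
    have h1 : ‖v‖ ^ 2 - ip ^ 2 ≤ (φ * ‖v‖) ^ 2 := by nlinarith [sq_nonneg ‖v‖]
    nlinarith [norm_nonneg (v - ip • u), mul_nonneg hφ0 hd0]
  have hφβ : φ * β = 2 * π / 13 := by rw [hφdef]; field_simp
  have hpvr : ‖v - ip • u‖ ≤ 0.485 * r := by
    have h2 : φ * ‖v‖ ≤ φ * (β * r) := mul_le_mul_of_nonneg_left hm hφ0
    nlinarith
  -- decomposition of m - x
  have hw : m - x = v + e := by rw [hv, he]; abel
  have hwt : ∀ t : ℝ, (m - x) - t • u = (v - ip • u) + (e - s • u) + ((ip + s) - t) • u := by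
    intro t
    rw [hw, sub_smul, add_smul]
    abel
  set t₀ : ℝ := ip + s with ht₀def
  have hpw : ‖(m - x) - t₀ • u‖ ≤ ‖v - ip • u‖ + ‖e - s • u‖ := by
    rw [hwt t₀, sub_self, zero_smul, add_zero]
    exact norm_add_le _ _
  by_cases ht₀ : 0 ≤ t₀
  · refine ⟨t₀, ht₀, ?_⟩
    have heq : (x + t₀ • u) - m = -((m - x) - t₀ • u) := by abel
    rw [heq, norm_neg]
    calc ‖(m - x) - t₀ • u‖ ≤ ‖v - ip • u‖ + ‖e - s • u‖ := hpw
      _ ≤ 0.485 * r + r / 2 := add_le_add hpvr hpe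
      _ ≤ r := by linarith
  · refine ⟨0, le_refl 0, ?_⟩
    push_neg at ht₀
    rw [zero_smul, add_zero, norm_sub_rev]
    -- Pythagoras: ‖m - x‖² = ‖(m-x) - t₀ u‖² + t₀²
    have hinner_w : (inner ℝ u (m-x) : ℝ) = t₀ := by
      rw [hw, inner_add_right, ht₀def]
    have hpyth : ‖(m - x) - t₀ • u‖ ^ 2 = ‖m - x‖ ^ 2 - t₀ ^ 2 :=
      hnormsq (m - x) t₀ hinner_w
    -- bound on ‖v‖ from t₀ < 0
    have hs_ge : -(r/2) ≤ s := neg_le_of_abs_le hs_abs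
    have h088 : 0.88 * ‖v‖ ≤ ip :=
      le_trans (mul_le_mul_of_nonneg_right hcφ hd0) hip_ge
    have ht₀_ge : 0.88 * ‖v‖ - r / 2 ≤ t₀ := by
      rw [ht₀def]; linarith
    have hd_small : 0.88 * ‖v‖ ≤ r / 2 := by linarith
    have ht₀sq : t₀ ^ 2 ≤ (r / 2) ^ 2 :=
      sq_le_sq' (by linarith) (by linarith)
    have hpv' : ‖v - ip • u‖ ≤ 0.485 * ‖v‖ :=
      le_trans hpv (mul_le_mul_of_nonneg_right hφ485 hd0)
    have hpwb : ‖(m - x) - t₀ • u‖ ≤ 0.485 * ‖v‖ + r / 2 :=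
      le_trans hpw (add_le_add hpv' hpe)
    have hd : ‖v‖ ≤ (25/44) * r := by linarith
    have hpwb2 : ‖(m - x) - t₀ • u‖ ≤ (0.485 * (25/44) + 0.5) * r := by linarith
    exact aux_final _ _ _ _ hr (norm_nonneg _) (norm_nonneg _) hpyth hpwb2 ht₀sq
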